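/- arXiv:1502.04157 — 2 statements merged into one kernel-verified Lean document; each statement's English description precedes it below -/
import Mathlib

section
/- For any twice continuously differentiable functions ζ, η : ℝ^N → ℝ, the pointwise identity holds: Δζ · Δ(ζη²) = [Δ(ζη)]² − 4(∇ζ·∇η)² − ζ²(Δη)² + 2ζΔζ|∇η|² − 4ζΔη(∇ζ·∇η). -/
open Real RealInnerProductSpace

noncomputable def lap {N : ℕ} (f : EuclideanSpace ℝ (Fin N) → ℝ)
    (x : EuclideanSpace ℝ (Fin N)) : ℝ :=
  ∑ i, fderiv ℝ (fun y => fderiv ℝ f y (EuclideanSpace.single i 1)) x (EuclideanSpace.single i 1)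

private lemma diff_d {N : ℕ} {f : EuclideanSpace ℝ (Fin N) → ℝ} (hf : ContDiff ℝ 2 f)
    (i : Fin N) :
    Differentiable ℝ (fun y => fderiv ℝ f y (EuclideanSpace.single i 1)) := by
  have h1 : ContDiff ℝ 1 (fun y => fderiv ℝ f y) := hf.fderiv_right (by norm_num)
  exact (h1.clm_apply contDiff_const).differentiable one_ne_zero

private lemma lap_mul {N : ℕ} {f g : EuclideanSpace ℝ (Fin N) → ℝ}
    (hf : ContDiff ℝ 2 f) (hg : ContDiff ℝ 2 g) (x : EuclideanSpace ℝ (Fin N)) :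
    lap (fun y => f y * g y) x = f x * lap g x + g x * lap f x +
      2 * ∑ i, fderiv ℝ f x (EuclideanSpace.single i 1) *
        fderiv ℝ g x (EuclideanSpace.single i 1) := by
  have hf1 : Differentiable ℝ f := hf.differentiable two_ne_zero
  have hg1 : Differentiable ℝ g := hg.differentiable two_ne_zero
  have key : ∀ i : Fin N,
      fderiv ℝ (fun y => fderiv ℝ (fun z => f z * g z) y (EuclideanSpace.single i 1)) x
        (EuclideanSpace.single i 1)
      = f x * fderiv ℝ (fun y => fderiv ℝ g y (EuclideanSpace.single i 1)) x
          (EuclideanSpace.single i 1)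
        + g x * fderiv ℝ (fun y => fderiv ℝ f y (EuclideanSpace.single i 1)) x
          (EuclideanSpace.single i 1)
        + 2 * (fderiv ℝ f x (EuclideanSpace.single i 1) *
            fderiv ℝ g x (EuclideanSpace.single i 1)) := by
    intro i
    have e1 : (fun y => fderiv ℝ (fun z => f z * g z) y (EuclideanSpace.single i 1))
        = fun y => f y * fderiv ℝ g y (EuclideanSpace.single i 1)
            + g y * fderiv ℝ f y (EuclideanSpace.single i 1) := by
      funext y
      rw [fderiv_fun_mul (hf1 y) (hg1 y)]
      simp [smul_eq_mul]
    rw [e1, fderiv_fun_add ((hf1 x).fun_mul ((diff_d hg i) x)) ((hg1 x).fun_mul ((diff_d hf i) x)),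
      fderiv_fun_mul (hf1 x) ((diff_d hg i) x), fderiv_fun_mul (hg1 x) ((diff_d hf i) x)]
    simp only [ContinuousLinearMap.add_apply, ContinuousLinearMap.smul_apply, smul_eq_mul]
    ring
  simp only [lap, key]
  rw [Finset.sum_add_distrib, Finset.sum_add_distrib, ← Finset.mul_sum, ← Finset.mul_sum,
    ← Finset.mul_sum]

private lemma inner_grad {N : ℕ} {f g : EuclideanSpace ℝ (Fin N) → ℝ}
    (hf : Differentiable ℝ f) (hg : Differentiable ℝ g) (x : EuclideanSpace ℝ (Fin N)) :
    ⟪gradient f x, gradient g x⟫ = ∑ i, fderiv ℝ f x (EuclideanSpace.single i 1) *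
      fderiv ℝ g x (EuclideanSpace.single i 1) := by
  have hgr : ∀ (h : EuclideanSpace ℝ (Fin N) → ℝ) (i : Fin N),
      gradient h x i = fderiv ℝ h x (EuclideanSpace.single i 1) := by
    intro h i
    have : (gradient h x) i = ⟪gradient h x, EuclideanSpace.single i (1:ℝ)⟫ := by
      rw [EuclideanSpace.inner_single_right]; simp
    rw [this, gradient, InnerProductSpace.toDual_symm_apply]
  rw [PiLp.inner_apply]
  simp only [RCLike.inner_apply, conj_trivial, hgr]
  exact Finset.sum_congr rfl fun i _ => mul_comm _ _

theorem stmt0 {N : ℕ} (ζ η : EuclideanSpace ℝ (Fin N) → ℝ)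
    (hζ : ContDiff ℝ 2 ζ) (hη : ContDiff ℝ 2 η) (x : EuclideanSpace ℝ (Fin N)) :
    lap ζ x * lap (fun y => ζ y * (η y) ^ 2) x =
      (lap (fun y => ζ y * η y) x) ^ 2
      - 4 * ⟪gradient ζ x, gradient η x⟫ ^ 2
      - (ζ x) ^ 2 * (lap η x) ^ 2
      + 2 * ζ x * lap ζ x * ‖gradient η x‖ ^ 2
      - 4 * ζ x * lap η x * ⟪gradient ζ x, gradient η x⟫ := by
  have hζ1 : Differentiable ℝ ζ := hζ.differentiable two_ne_zero
  have hη1 : Differentiable ℝ η := hη.differentiable two_ne_zero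
  have hζη : ContDiff ℝ 2 (fun y => ζ y * η y) := hζ.mul hη
  set A := lap ζ x with hA
  set B := lap η x with hB
  set G := ∑ i, fderiv ℝ ζ x (EuclideanSpace.single i 1) *
      fderiv ℝ η x (EuclideanSpace.single i 1) with hG
  set H := ∑ i, fderiv ℝ η x (EuclideanSpace.single i 1) *
      fderiv ℝ η x (EuclideanSpace.single i 1) with hH
  have hGG : ⟪gradient ζ x, gradient η x⟫ = G := inner_grad hζ1 hη1 x
  have hHH : ‖gradient η x‖ ^ 2 = H := by
    rw [← real_inner_self_eq_norm_sq]; exact inner_grad hη1 hη1 x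
  have hDζη : ∀ i : Fin N, fderiv ℝ (fun y => ζ y * η y) x (EuclideanSpace.single i 1)
      = ζ x * fderiv ℝ η x (EuclideanSpace.single i 1)
        + η x * fderiv ℝ ζ x (EuclideanSpace.single i 1) := by
    intro i
    rw [fderiv_fun_mul (hζ1 x) (hη1 x)]
    simp [smul_eq_mul]
  have h1 : lap (fun y => ζ y * η y) x = ζ x * B + η x * A + 2 * G :=
    lap_mul hζ hη x
  have h2 : lap (fun y => ζ y * (η y) ^ 2) x
      = (ζ x * η x) * B + η x * lap (fun y => ζ y * η y) x
        + 2 * ∑ i, fderiv ℝ (fun y => ζ y * η y) x (EuclideanSpace.single i 1) *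
            fderiv ℝ η x (EuclideanSpace.single i 1) := by
    have e : (fun y => ζ y * (η y) ^ 2) = fun y => (fun z => ζ z * η z) y * η y := by
      funext y; ring
    rw [e]
    exact lap_mul hζη hη x
  have h3 : ∑ i, fderiv ℝ (fun y => ζ y * η y) x (EuclideanSpace.single i 1) *
      fderiv ℝ η x (EuclideanSpace.single i 1) = ζ x * H + η x * G := by
    rw [hG, hH, Finset.mul_sum, Finset.mul_sum, ← Finset.sum_add_distrib]
    refine Finset.sum_congr rfl fun i _ => ?_
    rw [hDζη i]; ring
  rw [hGG, hHH, h2, h3, h1]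
  ring
end

section
/- Let Ω ⊆ ℝ^N be open, u, v ∈ C²(Ω) with u ≥ 0, v real-valued, satisfying −Δu = (1+|x|²)^{α/2} v on Ω, and set δ = sqrt(2/(p+1)) and γ = δ·u^{(p+1)/2} − v for p > 1. If additionally −Δv = (1+|x|²)^{α/2} u^p on Ω, then pointwise Δγ ≥ δ^{−1}(1+|x|²)^{α/2} u^{(p−1)/2} γ on Ω. -/
open Real

theorem stmt15 {N : ℕ} (Ω : Set (EuclideanSpace ℝ (Fin N))) (hΩ : IsOpen Ω)
    (p α : ℝ) (hp : 1 < p) (hα : 0 ≤ α)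
    (u v : EuclideanSpace ℝ (Fin N) → ℝ)
    (hu : ContDiffOn ℝ 2 u Ω) (hv : ContDiffOn ℝ 2 v Ω)
    (hu0 : ∀ x ∈ Ω, 0 ≤ u x)
    (heq1 : ∀ x ∈ Ω, -lap u x = (1 + ‖x‖ ^ 2) ^ (α / 2) * v x)
    (heq2 : ∀ x ∈ Ω, -lap v x = (1 + ‖x‖ ^ 2) ^ (α / 2) * u x ^ p) :
    ∀ x ∈ Ω,
      lap (fun y => Real.sqrt (2 / (p + 1)) * u y ^ ((p + 1) / 2) - v y) x ≥
        (Real.sqrt (2 / (p + 1)))⁻¹ * (1 + ‖x‖ ^ 2) ^ (α / 2) *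
          u x ^ ((p - 1) / 2) *
          (Real.sqrt (2 / (p + 1)) * u x ^ ((p + 1) / 2) - v x) := by
  intro x hx
  have hp1 : (0:ℝ) < p + 1 := by linarith
  set δ : ℝ := Real.sqrt (2 / (p + 1)) with hδdef
  set q : ℝ := (p + 1) / 2 with hqdef
  have hδpos : 0 < δ := Real.sqrt_pos.mpr (by positivity)
  have hδsq : δ * δ = 2 / (p + 1) := Real.mul_self_sqrt (by positivity)
  have hq1 : 1 < q := by rw [hqdef]; linarith
  have hq0 : 0 < q := by linarith
  have hδδq : δ * q * δ = 1 := by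
    rw [mul_comm δ q, mul_assoc, hδsq, hqdef]; field_simp
  have hδq : δ * q = δ⁻¹ := by
    rw [inv_eq_one_div, eq_div_iff hδpos.ne']; exact hδδq
  have hΩx : Ω ∈ nhds x := hΩ.mem_nhds hx
  -- differentiability facts
  have huC : ∀ y ∈ Ω, ContDiffAt ℝ 2 u y := fun y hy => hu.contDiffAt (hΩ.mem_nhds hy)
  have huD : ∀ y ∈ Ω, DifferentiableAt ℝ u y :=
    fun y hy => (huC y hy).differentiableAt two_ne_zero
  have hvD : ∀ y ∈ Ω, DifferentiableAt ℝ v y :=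
    fun y hy => ((hv.contDiffAt (hΩ.mem_nhds hy))).differentiableAt two_ne_zero
  have huD2 : DifferentiableAt ℝ (fderiv ℝ u) x :=
    ((huC x hx).fderiv_right (m := 1) (by norm_num)).differentiableAt one_ne_zero
  have hvD2 : DifferentiableAt ℝ (fderiv ℝ v) x :=
    (((hv.contDiffAt hΩx)).fderiv_right (m := 1) (by norm_num)).differentiableAt one_ne_zero
  have hparti : ∀ i, DifferentiableAt ℝ
      (fun y => fderiv ℝ u y (EuclideanSpace.single i 1)) x :=
    fun i => huD2.clm_apply (differentiableAt_const _)
  have hpartv : ∀ i, DifferentiableAt ℝ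
      (fun y => fderiv ℝ v y (EuclideanSpace.single i 1)) x :=
    fun i => hvD2.clm_apply (differentiableAt_const _)
  -- first derivative of γ on Ω
  have hγ : ∀ y ∈ Ω, HasFDerivAt (fun z => δ * u z ^ q - v z)
      (δ • ((q * u y ^ (q - 1)) • fderiv ℝ u y) - fderiv ℝ v y) y := by
    intro y hy
    exact ((((huD y hy).hasFDerivAt).rpow_const (Or.inr hq1.le)).const_mul δ).sub
      (hvD y hy).hasFDerivAt
  have hev : ∀ i, (fun y => fderiv ℝ (fun z => δ * u z ^ q - v z) y
        (EuclideanSpace.single i 1)) =ᶠ[nhds x]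
      (fun y => δ * (q * u y ^ (q - 1) * fderiv ℝ u y (EuclideanSpace.single i 1)) -
        fderiv ℝ v y (EuclideanSpace.single i 1)) := by
    intro i
    filter_upwards [hΩx] with y hy
    rw [(hγ y hy).fderiv]
    simp [ContinuousLinearMap.sub_apply, ContinuousLinearMap.smul_apply, smul_eq_mul,
      mul_assoc]
  have hfd : ∀ i, fderiv ℝ (fun y => fderiv ℝ (fun z => δ * u z ^ q - v z) y
        (EuclideanSpace.single i 1)) x
      = fderiv ℝ (fun y => δ * (q * u y ^ (q - 1) *
          fderiv ℝ u y (EuclideanSpace.single i 1)) -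
          fderiv ℝ v y (EuclideanSpace.single i 1)) x :=
    fun i => (hev i).fderiv_eq
  -- the key second-derivative estimate for u^q
  have key : ∃ G : Fin N → (EuclideanSpace ℝ (Fin N) →L[ℝ] ℝ),
      (∀ i, HasFDerivAt (fun y => q * u y ^ (q - 1) *
          fderiv ℝ u y (EuclideanSpace.single i 1)) (G i) x) ∧
      q * u x ^ (q - 1) * lap u x ≤ ∑ i, (G i) (EuclideanSpace.single i 1) := by
    rcases eq_or_lt_of_le (hu0 x hx) with h0 | hpos
    · -- u x = 0
      have h0' : u x = 0 := h0.symm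
      have hq1' : q - 1 ≠ 0 := sub_ne_zero_of_ne hq1.ne'
      have humin : IsLocalMin u x := by
        filter_upwards [hΩx] with y hy
        rw [h0']; exact hu0 y hy
      have hDu0 : fderiv ℝ u x = 0 := humin.fderiv_eq_zero
      have hu_o : (fun y => u y) =o[nhds x] fun y => y - x := by
        have h1 := (huD x hx).hasFDerivAt
        rw [hDu0] at h1
        have h2 := h1.isLittleO
        simpa [h0'] using h2
      have h3 : (fun y => u y ^ (q - 1)) =o[nhds x] fun y => ‖y - x‖ ^ (q - 1) :=
        (hu_o.norm_right).rpow (by linarith) (Filter.Eventually.of_forall fun y => norm_nonneg _)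
      refine ⟨fun _ => 0, fun i => ?_, ?_⟩
      · have h4 : (fun y => fderiv ℝ u y (EuclideanSpace.single i 1)) =O[nhds x]
            fun y => y - x := by
          have h5 := (hparti i).isBigO_sub
          simpa [hDu0] using h5
        have h6 : (fun y => u y ^ (q - 1) * fderiv ℝ u y (EuclideanSpace.single i 1))
            =o[nhds x] fun y => ‖y - x‖ ^ (q - 1) * ‖y - x‖ := h3.mul_isBigO h4.norm_right
        have h7 : (fun y : EuclideanSpace ℝ (Fin N) => ‖y - x‖ ^ (q - 1) * ‖y - x‖)
            =O[nhds x] fun y => y - x := by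
          rw [Asymptotics.isBigO_iff]
          refine ⟨1, ?_⟩
          filter_upwards [Metric.closedBall_mem_nhds x one_pos] with y hy
          have hy1 : ‖y - x‖ ≤ 1 := by
            rw [← dist_eq_norm]; exact Metric.mem_closedBall.mp hy
          have h8 : ‖y - x‖ ^ (q - 1) ≤ 1 :=
            Real.rpow_le_one (norm_nonneg _) hy1 (by linarith)
          have h9 : 0 ≤ ‖y - x‖ ^ (q - 1) := Real.rpow_nonneg (norm_nonneg _) _
          rw [Real.norm_eq_abs, abs_of_nonneg (mul_nonneg h9 (norm_nonneg _)), one_mul]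
          calc ‖y - x‖ ^ (q - 1) * ‖y - x‖ ≤ 1 * ‖y - x‖ :=
                mul_le_mul_of_nonneg_right h8 (norm_nonneg _)
            _ = ‖y - x‖ := one_mul _
        have h10 := (h6.trans_isBigO h7).const_mul_left q
        refine HasFDerivAtFilter.of_isLittleO ?_
        simpa [h0', Real.zero_rpow hq1', mul_assoc, Function.comp_def] using h10
      · simp [h0', Real.zero_rpow hq1']
    · -- u x > 0
      have hne : u x ≠ 0 := ne_of_gt hpos
      refine ⟨fun i => q • (u x ^ (q - 1) •
          fderiv ℝ (fun y => fderiv ℝ u y (EuclideanSpace.single i 1)) x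
          + (fderiv ℝ u x (EuclideanSpace.single i 1)) •
            (((q - 1) * u x ^ (q - 1 - 1)) • fderiv ℝ u x)), fun i => ?_, ?_⟩
      · have hr : HasFDerivAt (fun y => u y ^ (q - 1))
            (((q - 1) * u x ^ (q - 1 - 1)) • fderiv ℝ u x) x :=
          ((huD x hx).hasFDerivAt).rpow_const (Or.inl hne)
        have hdi := (hparti i).hasFDerivAt
        have h11 := (hr.mul hdi).const_mul q
        simpa [mul_assoc] using h11
      · have hsum : lap u x = ∑ i, fderiv ℝ
            (fun y => fderiv ℝ u y (EuclideanSpace.single i 1)) x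
            (EuclideanSpace.single i 1) := rfl
        have heval : ∀ i : Fin N, (q • (u x ^ (q - 1) •
            fderiv ℝ (fun y => fderiv ℝ u y (EuclideanSpace.single i 1)) x
            + (fderiv ℝ u x (EuclideanSpace.single i 1)) •
              (((q - 1) * u x ^ (q - 1 - 1)) • fderiv ℝ u x)))
            (EuclideanSpace.single i 1)
            = q * u x ^ (q - 1) * fderiv ℝ
                (fun y => fderiv ℝ u y (EuclideanSpace.single i 1)) x
                (EuclideanSpace.single i 1)
              + q * (q - 1) * u x ^ (q - 1 - 1) *
                (fderiv ℝ u x (EuclideanSpace.single i 1)) ^ 2 := by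
          intro i
          simp [ContinuousLinearMap.add_apply, ContinuousLinearMap.smul_apply, smul_eq_mul]
          ring
        rw [Finset.sum_congr rfl fun i _ => heval i, Finset.sum_add_distrib,
          ← Finset.mul_sum, ← Finset.mul_sum, ← hsum]
        have hS : 0 ≤ ∑ i, (fderiv ℝ u x (EuclideanSpace.single i 1)) ^ 2 :=
          Finset.sum_nonneg fun i _ => sq_nonneg _
        have hc : 0 ≤ q * (q - 1) * u x ^ (q - 1 - 1) :=
          mul_nonneg (mul_nonneg hq0.le (by linarith)) (Real.rpow_nonneg hpos.le _)
        nlinarith [mul_nonneg hc hS]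
  obtain ⟨G, hG, hGsum⟩ := key
  -- second derivative of γ, coordinatewise
  have hterm : ∀ i, fderiv ℝ (fun y => fderiv ℝ (fun z => δ * u z ^ q - v z) y
        (EuclideanSpace.single i 1)) x (EuclideanSpace.single i 1)
      = δ * (G i) (EuclideanSpace.single i 1) -
        fderiv ℝ (fun y => fderiv ℝ v y (EuclideanSpace.single i 1)) x
          (EuclideanSpace.single i 1) := by
    intro i
    rw [hfd i]
    have h2 : HasFDerivAt (fun y => δ * (q * u y ^ (q - 1) *
        fderiv ℝ u y (EuclideanSpace.single i 1)) -
        fderiv ℝ v y (EuclideanSpace.single i 1))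
        (δ • G i - fderiv ℝ (fun y => fderiv ℝ v y (EuclideanSpace.single i 1)) x) x :=
      ((hG i).const_mul δ).sub (hpartv i).hasFDerivAt
    rw [h2.fderiv]
    simp [ContinuousLinearMap.sub_apply, ContinuousLinearMap.smul_apply, smul_eq_mul]
  have hlapγ : lap (fun z => δ * u z ^ q - v z) x
      = δ * (∑ i, (G i) (EuclideanSpace.single i 1)) - lap v x := by
    have h1 : lap (fun z => δ * u z ^ q - v z) x
        = ∑ i, (δ * (G i) (EuclideanSpace.single i 1) -
          fderiv ℝ (fun y => fderiv ℝ v y (EuclideanSpace.single i 1)) x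
            (EuclideanSpace.single i 1)) := by
      simp only [lap]
      exact Finset.sum_congr rfl fun i _ => hterm i
    rw [h1, Finset.sum_sub_distrib, ← Finset.mul_sum]
    rfl
  -- assemble
  have hR : (0:ℝ) ≤ (1 + ‖x‖ ^ 2) ^ (α / 2) := Real.rpow_nonneg (by positivity) _
  have hlapu : lap u x = -((1 + ‖x‖ ^ 2) ^ (α / 2) * v x) := by linarith [heq1 x hx]
  have hlapv : lap v x = -((1 + ‖x‖ ^ 2) ^ (α / 2) * u x ^ p) := by linarith [heq2 x hx]
  have hmono : δ * (q * u x ^ (q - 1) * lap u x) ≤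
      δ * ∑ i, (G i) (EuclideanSpace.single i 1) :=
    mul_le_mul_of_nonneg_left hGsum hδpos.le
  have hup : u x ^ p = u x ^ ((p - 1) / 2) * u x ^ q := by
    rw [← Real.rpow_add_of_nonneg (hu0 x hx) (by linarith) (by rw [hqdef]; linarith)]
    congr 1
    rw [hqdef]; ring
  have hq2 : q - 1 = (p - 1) / 2 := by rw [hqdef]; ring
  have hkey : δ⁻¹ * (1 + ‖x‖ ^ 2) ^ (α / 2) * u x ^ ((p - 1) / 2) *
      (δ * u x ^ q - v x)
      = δ * (q * u x ^ (q - 1) * -((1 + ‖x‖ ^ 2) ^ (α / 2) * v x))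
        + (1 + ‖x‖ ^ 2) ^ (α / 2) * u x ^ p := by
    rw [← hδq, hq2, hup]
    linear_combination (1 + ‖x‖ ^ 2) ^ (α / 2) * u x ^ ((p - 1) / 2) * u x ^ q * hδδq
  rw [hlapu] at hmono
  rw [ge_iff_le, hlapγ, hlapv, hkey]
  linarith [hmono]
end
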